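/- Let (S, →, s_init, Bad) be a transition system and let →_1, …, →_k be relations on S with → = ⋃_{i=1}^k →_i. Then Bad is reachable from s_init in (S, →) if and only if the set {(s, j) | s ∈ Bad, 0 ≤ j ≤ k} is reachable from (s_init, 0) in the scheduled system. (Soundness of the scheduler transformation.) -/
import Mathlib


/-- The transition relation of the scheduled system: states are pairs of a
state of the original system and a mode (`none` = mode 0, `some i` = mode i).
From `(s, 0)` the scheduler may select any relation index `i` such that `s`
has at least one `→ᵢ`-successor; from `(s, i)` the system performs an
`→ᵢ`-step back to mode 0. -/
def schedStep {S : Type*} {k : ℕ} (rels : Fin k → S → S → Prop) :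
    S × Option (Fin k) → S × Option (Fin k) → Prop :=
  fun p q =>
    match p, q with
    | (s, none), (t, some i) => t = s ∧ ∃ u, rels i s u
    | (s, some i), (t, none) => rels i s t
    | _, _ => False

/-- **Soundness of the scheduler transformation.** If `→ = ⋃ᵢ →ᵢ`, then `Bad`
is reachable from `s_init` in the original system iff
`{(s, j) | s ∈ Bad}` is reachable from `(s_init, 0)` in the scheduled system. -/
theorem scheduler_soundness {S : Type*} {k : ℕ} (rels : Fin k → S → S → Prop)
    (step : S → S → Prop) (hstep : ∀ s t, step s t ↔ ∃ i, rels i s t)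
    (sinit : S) (Bad : Set S) :
    (∃ s ∈ Bad, Relation.ReflTransGen step sinit s) ↔
      (∃ s ∈ Bad, ∃ m : Option (Fin k),
        Relation.ReflTransGen (schedStep rels) (sinit, none) (s, m)) := by
  constructor
  · rintro ⟨s, hs, hreach⟩
    refine ⟨s, hs, none, ?_⟩
    clear hs
    induction hreach with
    | refl => exact Relation.ReflTransGen.refl
    | tail _ hbc ih =>
      obtain ⟨i, hi⟩ := (hstep _ _).mp hbc
      exact (ih.tail (show schedStep rels (_, none) (_, some i) from
        ⟨rfl, _, hi⟩)).tail hi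
  · rintro ⟨s, hs, m, hreach⟩
    refine ⟨s, hs, ?_⟩
    have key : ∀ p : S × Option (Fin k),
        Relation.ReflTransGen (schedStep rels) (sinit, none) p →
        Relation.ReflTransGen step sinit p.1 := by
      intro p hp
      induction hp with
      | refl => exact Relation.ReflTransGen.refl
      | tail _ hbc ih =>
        rename_i b c _
        obtain ⟨b, mb⟩ := b
        obtain ⟨c, mc⟩ := c
        match mb, mc, hbc with
        | none, some i, ⟨heq, _⟩ => subst heq; exact ih
        | some i, none, h => exact ih.tail ((hstep _ _).mpr ⟨i, h⟩)
    exact key (s, m) hreach
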